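/- Let K be a field and R = K[x1,…,x6] the polynomial ring in six variables over K, and let I be the ideal of R generated by the monomials x1x3, x1x4, x1x6, x2x4, x2x5, x3x5, x3x6, x4x6. Then I equals the radical of the ideal generated by the four polynomials x1x6, x3x5, x1x3 + x2x4 + x3x6, x1x4 + x2x5 + x4x6. -/

import Mathlib

open MvPolynomial

section Aux

variable {K : Type*} [Field K]

private lemma coeff_kill_aux (S : Set (Fin 6)) [DecidablePred (· ∈ S)]
    (f : MvPolynomial (Fin 6) K) (m : Fin 6 →₀ ℕ) (hm : ∀ i ∈ S, m i = 0) :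
    coeff m (aeval (fun i => if i ∈ S then (0 : MvPolynomial (Fin 6) K) else X i) f)
      = coeff m f := by
  induction f using MvPolynomial.induction_on' with
  | add p q hp hq => rw [map_add, coeff_add, hp, hq, coeff_add]
  | monomial m' c =>
    rw [aeval_monomial]
    by_cases h : ∀ i ∈ m'.support, i ∉ S
    · have : (m'.prod fun i k => (if i ∈ S then (0 : MvPolynomial (Fin 6) K) else X i) ^ k)
          = m'.prod fun i k => X i ^ k := by
        apply Finset.prod_congr rfl
        intro i hi
        dsimp only
        rw [if_neg (h i hi)]
      rw [this, algebraMap_eq, ← monomial_eq]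
    · push_neg at h
      obtain ⟨i, hi, hiS⟩ := h
      have : (m'.prod fun i k => (if i ∈ S then (0 : MvPolynomial (Fin 6) K) else X i) ^ k)
          = 0 := by
        apply Finset.prod_eq_zero hi
        dsimp only
        rw [if_pos hiS]
        exact zero_pow (Finsupp.mem_support_iff.mp hi)
      rw [this, mul_zero, coeff_zero, coeff_monomial, if_neg]
      intro e
      exact Finsupp.mem_support_iff.mp hi (e ▸ hm i hiS)

private lemma isRadical_spanX_aux (S : Set (Fin 6)) :
    (Ideal.span (X '' S : Set (MvPolynomial (Fin 6) K))).IsRadical := by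
  classical
  rintro f ⟨n, hfn⟩
  by_contra hf
  rw [mem_ideal_span_X_image] at hf
  push_neg at hf
  obtain ⟨m, hm, hmS⟩ := hf
  set φ := aeval (R := K) (fun i => if i ∈ S then (0 : MvPolynomial (Fin 6) K) else X i)
  have hker : ∀ g ∈ Ideal.span (X '' S : Set (MvPolynomial (Fin 6) K)), φ g = 0 := by
    intro g hg
    have : Ideal.span (X '' S : Set (MvPolynomial (Fin 6) K)) ≤ RingHom.ker φ := by
      rw [Ideal.span_le]
      rintro _ ⟨i, hiS, rfl⟩
      simp [φ, RingHom.mem_ker, if_pos hiS]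
    exact this hg
  have h1 : φ f ^ n = 0 := by rw [← map_pow]; exact hker _ hfn
  have h2 : φ f = 0 := pow_eq_zero_iff' |>.mp h1 |>.1
  have h3 : coeff m (φ f) = coeff m f := coeff_kill_aux S f m hmS
  rw [h2, coeff_zero] at h3
  exact MvPolynomial.mem_support_iff.mp hm h3.symm

private lemma memXS_aux {S : Set (Fin 6)} {i j : Fin 6} (h : i ∈ S ∨ j ∈ S) :
    (X i : MvPolynomial (Fin 6) K) * X j ∈ Ideal.span (X '' S) := by
  rcases h with h | h
  · rw [mul_comm]
    exact Ideal.mul_mem_left _ _ (Ideal.subset_span ⟨i, h, rfl⟩)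
  · exact Ideal.mul_mem_left _ _ (Ideal.subset_span ⟨j, h, rfl⟩)

private lemma comb_aux : ∀ T : Fin 6 → Bool,
    (T 2 || T 3 || T 4 || T 5) = true → (T 1 || T 2 || T 3 || T 5) = true →
    (T 0 || T 3 || T 4 || T 5) = true → (T 0 || T 2 || T 3 || T 4) = true →
    (T 0 || T 1 || T 4 || T 5) = true → (T 0 || T 1 || T 2 || T 5) = true →
    (T 0 || T 1 || T 2 || T 3) = true →
    (T 0 && T 2 || T 0 && T 3 || T 0 && T 5 || T 1 && T 3 || T 1 && T 4 ||
     T 2 && T 4 || T 2 && T 5 || T 3 && T 5) = true := by decide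

private lemma le_e_aux {i j : Fin 6} {m : Fin 6 →₀ ℕ} (hij : i ≠ j)
    (hi : m i ≠ 0) (hj : m j ≠ 0) :
    Finsupp.single i 1 + Finsupp.single j 1 ≤ m := by
  refine Finsupp.le_def.mpr fun k => ?_
  rw [Finsupp.add_apply, Finsupp.single_apply, Finsupp.single_apply]
  by_cases h1 : i = k <;> by_cases h2 : j = k
  · exact absurd (h1.trans h2.symm) hij
  · subst h1
    rw [if_pos rfl, if_neg h2]
    omega
  · subst h2
    rw [if_neg h1, if_pos rfl]
    omega
  · rw [if_neg h1, if_neg h2]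
    omega

end Aux

theorem heptagonal_eq_radical_four (K : Type*) [Field K] :
    Ideal.span ({X 0 * X 2, X 0 * X 3, X 0 * X 5, X 1 * X 3, X 1 * X 4,
        X 2 * X 4, X 2 * X 5, X 3 * X 5} : Set (MvPolynomial (Fin 6) K)) =
      (Ideal.span ({X 0 * X 5, X 2 * X 4,
        X 0 * X 2 + X 1 * X 3 + X 2 * X 5,
        X 0 * X 3 + X 1 * X 4 + X 3 * X 5} : Set (MvPolynomial (Fin 6) K))).radical := by
  classical
  set R' := MvPolynomial (Fin 6) K
  set a : R' := X 0 * X 5 with ha_def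
  set b : R' := X 2 * X 4 with hb_def
  set c : R' := X 0 * X 2 + X 1 * X 3 + X 2 * X 5 with hc_def
  set d : R' := X 0 * X 3 + X 1 * X 4 + X 3 * X 5 with hd_def
  set J : Ideal R' := Ideal.span {a, b, c, d} with hJ_def
  have haJ : a ∈ J.radical := Ideal.le_radical (Ideal.subset_span (by simp))
  have hbJ : b ∈ J.radical := Ideal.le_radical (Ideal.subset_span (by simp))
  have hcJ : c ∈ J.radical := Ideal.le_radical (Ideal.subset_span (by simp))
  have hdJ : d ∈ J.radical := Ideal.le_radical (Ideal.subset_span (by simp))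
  -- the generators of I are in the radical of J
  have h13 : (X 1 * X 3 : R') ∈ J.radical := by
    apply Ideal.mem_radical_of_pow_mem (m := 2)
    have : (X 1 * X 3 : R') ^ 2 = X 1 * X 3 * c - X 1 * X 2 * d + X 1 ^ 2 * b := by
      rw [hc_def, hd_def, hb_def]; ring
    rw [this]
    exact add_mem (sub_mem (Ideal.mul_mem_left _ _ hcJ) (Ideal.mul_mem_left _ _ hdJ))
      (Ideal.mul_mem_left _ _ hbJ)
  have h14 : (X 1 * X 4 : R') ∈ J.radical := by
    apply Ideal.mem_radical_of_pow_mem (m := 2)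
    have : (X 1 * X 4 : R') ^ 2 =
        X 1 * X 4 * d - (X 0 + X 5) * X 4 * c + (X 0 + X 5) ^ 2 * b := by
      rw [hc_def, hd_def, hb_def]; ring
    rw [this]
    exact add_mem (sub_mem (Ideal.mul_mem_left _ _ hdJ) (Ideal.mul_mem_left _ _ hcJ))
      (Ideal.mul_mem_left _ _ hbJ)
  have h25 : (X 2 * X 5 : R') ∈ J.radical := by
    apply Ideal.mem_radical_of_pow_mem (m := 2)
    have : (X 2 * X 5 : R') ^ 2 =
        X 2 * X 5 * c - X 2 ^ 2 * a - X 2 * X 5 * (X 1 * X 3) := by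
      rw [hc_def, ha_def]; ring
    rw [this]
    exact sub_mem (sub_mem (Ideal.mul_mem_left _ _ hcJ) (Ideal.mul_mem_left _ _ haJ))
      (Ideal.mul_mem_left _ _ h13)
  have h35 : (X 3 * X 5 : R') ∈ J.radical := by
    apply Ideal.mem_radical_of_pow_mem (m := 2)
    have : (X 3 * X 5 : R') ^ 2 =
        X 3 * X 5 * d - X 3 ^ 2 * a - X 3 * X 5 * (X 1 * X 4) := by
      rw [hd_def, ha_def]; ring
    rw [this]
    exact sub_mem (sub_mem (Ideal.mul_mem_left _ _ hdJ) (Ideal.mul_mem_left _ _ haJ))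
      (Ideal.mul_mem_left _ _ h14)
  have h02 : (X 0 * X 2 : R') ∈ J.radical := by
    have : (X 0 * X 2 : R') = c - X 1 * X 3 - X 2 * X 5 := by rw [hc_def]; ring
    rw [this]
    exact sub_mem (sub_mem hcJ h13) h25
  have h03 : (X 0 * X 3 : R') ∈ J.radical := by
    have : (X 0 * X 3 : R') = d - X 1 * X 4 - X 3 * X 5 := by rw [hd_def]; ring
    rw [this]
    exact sub_mem (sub_mem hdJ h14) h35
  apply le_antisymm
  · rw [Ideal.span_le]
    rintro g hg
    simp only [Set.mem_insert_iff, Set.mem_singleton_iff] at hg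
    rcases hg with rfl | rfl | rfl | rfl | rfl | rfl | rfl | rfl
    exacts [h02, h03, haJ, h13, h14, hbJ, h25, h35]
  · -- radical J ≤ I via the seven minimal primes (vertex covers)
    intro f hf
    -- the seven covers
    have key : ∀ S : Set (Fin 6), a ∈ Ideal.span ((X : Fin 6 → R') '' S) →
        b ∈ Ideal.span ((X : Fin 6 → R') '' S) → c ∈ Ideal.span ((X : Fin 6 → R') '' S) →
        d ∈ Ideal.span ((X : Fin 6 → R') '' S) →
        ∀ m ∈ f.support, ∃ i ∈ S, (m : Fin 6 →₀ ℕ) i ≠ 0 := by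
      intro S hA hB hC hD
      have hJS : J ≤ Ideal.span ((X : Fin 6 → R') '' S) := by
        rw [hJ_def, Ideal.span_le]
        rintro g hg
        simp only [Set.mem_insert_iff, Set.mem_singleton_iff] at hg
        rcases hg with rfl | rfl | rfl | rfl
        exacts [hA, hB, hC, hD]
      have := ((isRadical_spanX_aux S).radical_le_iff.mpr hJS) hf
      exact mem_ideal_span_X_image.mp this
    have K1 := key {2, 3, 4, 5}
      (memXS_aux (Or.inr (by simp))) (memXS_aux (Or.inl (by simp)))
      (add_mem (add_mem (memXS_aux (Or.inr (by simp))) (memXS_aux (Or.inr (by simp))))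
        (memXS_aux (Or.inl (by simp))))
      (add_mem (add_mem (memXS_aux (Or.inr (by simp))) (memXS_aux (Or.inr (by simp))))
        (memXS_aux (Or.inl (by simp))))
    have K2 := key {1, 2, 3, 5}
      (memXS_aux (Or.inr (by simp))) (memXS_aux (Or.inl (by simp)))
      (add_mem (add_mem (memXS_aux (Or.inr (by simp))) (memXS_aux (Or.inl (by simp))))
        (memXS_aux (Or.inl (by simp))))
      (add_mem (add_mem (memXS_aux (Or.inr (by simp))) (memXS_aux (Or.inl (by simp))))
        (memXS_aux (Or.inl (by simp))))
    have K3 := key {0, 3, 4, 5}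
      (memXS_aux (Or.inl (by simp))) (memXS_aux (Or.inr (by simp)))
      (add_mem (add_mem (memXS_aux (Or.inl (by simp))) (memXS_aux (Or.inr (by simp))))
        (memXS_aux (Or.inr (by simp))))
      (add_mem (add_mem (memXS_aux (Or.inl (by simp))) (memXS_aux (Or.inr (by simp))))
        (memXS_aux (Or.inl (by simp))))
    have K4 := key {0, 2, 3, 4}
      (memXS_aux (Or.inl (by simp))) (memXS_aux (Or.inl (by simp)))
      (add_mem (add_mem (memXS_aux (Or.inl (by simp))) (memXS_aux (Or.inr (by simp))))
        (memXS_aux (Or.inl (by simp))))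
      (add_mem (add_mem (memXS_aux (Or.inl (by simp))) (memXS_aux (Or.inr (by simp))))
        (memXS_aux (Or.inl (by simp))))
    have K5 := key {0, 1, 4, 5}
      (memXS_aux (Or.inl (by simp))) (memXS_aux (Or.inr (by simp)))
      (add_mem (add_mem (memXS_aux (Or.inl (by simp))) (memXS_aux (Or.inl (by simp))))
        (memXS_aux (Or.inr (by simp))))
      (add_mem (add_mem (memXS_aux (Or.inl (by simp))) (memXS_aux (Or.inl (by simp))))
        (memXS_aux (Or.inr (by simp))))
    have K6 := key {0, 1, 2, 5}
      (memXS_aux (Or.inl (by simp))) (memXS_aux (Or.inl (by simp)))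
      (add_mem (add_mem (memXS_aux (Or.inl (by simp))) (memXS_aux (Or.inl (by simp))))
        (memXS_aux (Or.inl (by simp))))
      (add_mem (add_mem (memXS_aux (Or.inl (by simp))) (memXS_aux (Or.inl (by simp))))
        (memXS_aux (Or.inr (by simp))))
    have K7 := key {0, 1, 2, 3}
      (memXS_aux (Or.inl (by simp))) (memXS_aux (Or.inl (by simp)))
      (add_mem (add_mem (memXS_aux (Or.inl (by simp))) (memXS_aux (Or.inl (by simp))))
        (memXS_aux (Or.inl (by simp))))
      (add_mem (add_mem (memXS_aux (Or.inl (by simp))) (memXS_aux (Or.inl (by simp))))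
        (memXS_aux (Or.inl (by simp))))
    -- now show f ∈ I via the monomial membership criterion
    have himg : ({X 0 * X 2, X 0 * X 3, X 0 * X 5, X 1 * X 3, X 1 * X 4,
          X 2 * X 4, X 2 * X 5, X 3 * X 5} : Set R') =
        (fun s => monomial s (1 : K)) ''
          {Finsupp.single 0 1 + Finsupp.single 2 1, Finsupp.single 0 1 + Finsupp.single 3 1,
           Finsupp.single 0 1 + Finsupp.single 5 1, Finsupp.single 1 1 + Finsupp.single 3 1,
           Finsupp.single 1 1 + Finsupp.single 4 1, Finsupp.single 2 1 + Finsupp.single 4 1,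
           Finsupp.single 2 1 + Finsupp.single 5 1, Finsupp.single 3 1 + Finsupp.single 5 1} := by
      have hXX : ∀ i j : Fin 6, (X i : R') * X j
          = monomial (Finsupp.single i 1 + Finsupp.single j 1) (1 : K) := by
        intro i j
        calc (X i : R') * X j
            = monomial (Finsupp.single i 1) (1 : K) * monomial (Finsupp.single j 1) (1 : K) :=
              rfl
          _ = monomial (Finsupp.single i 1 + Finsupp.single j 1) ((1 : K) * 1) := monomial_mul
          _ = monomial (Finsupp.single i 1 + Finsupp.single j 1) (1 : K) := by rw [mul_one]
      simp only [Set.image_insert_eq, Set.image_singleton, hXX]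
    rw [himg, mem_ideal_span_monomial_image]
    intro m hm
    -- turn the seven cover conditions into boolean facts
    have toBool : ∀ S : Set (Fin 6), (∃ i ∈ S, m i ≠ 0) → ∃ i ∈ S, decide (m i ≠ 0) = true := by
      rintro S ⟨i, hiS, hi⟩
      exact ⟨i, hiS, decide_eq_true hi⟩
    have mk : ∀ i : Fin 6, decide (m i ≠ 0) = true → m i ≠ 0 := fun i h => of_decide_eq_true h
    set T : Fin 6 → Bool := fun i => decide (m i ≠ 0) with hT
    have b1 : (T 2 || T 3 || T 4 || T 5) = true := by
      obtain ⟨i, hiS, hi⟩ := toBool _ (K1 m hm)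
      simp only [Set.mem_insert_iff, Set.mem_singleton_iff] at hiS
      rcases hiS with rfl | rfl | rfl | rfl <;> simp [hT, mk _ hi]
    have b2 : (T 1 || T 2 || T 3 || T 5) = true := by
      obtain ⟨i, hiS, hi⟩ := toBool _ (K2 m hm)
      simp only [Set.mem_insert_iff, Set.mem_singleton_iff] at hiS
      rcases hiS with rfl | rfl | rfl | rfl <;> simp [hT, mk _ hi]
    have b3 : (T 0 || T 3 || T 4 || T 5) = true := by
      obtain ⟨i, hiS, hi⟩ := toBool _ (K3 m hm)
      simp only [Set.mem_insert_iff, Set.mem_singleton_iff] at hiS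
      rcases hiS with rfl | rfl | rfl | rfl <;> simp [hT, mk _ hi]
    have b4 : (T 0 || T 2 || T 3 || T 4) = true := by
      obtain ⟨i, hiS, hi⟩ := toBool _ (K4 m hm)
      simp only [Set.mem_insert_iff, Set.mem_singleton_iff] at hiS
      rcases hiS with rfl | rfl | rfl | rfl <;> simp [hT, mk _ hi]
    have b5 : (T 0 || T 1 || T 4 || T 5) = true := by
      obtain ⟨i, hiS, hi⟩ := toBool _ (K5 m hm)
      simp only [Set.mem_insert_iff, Set.mem_singleton_iff] at hiS
      rcases hiS with rfl | rfl | rfl | rfl <;> simp [hT, mk _ hi]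
    have b6 : (T 0 || T 1 || T 2 || T 5) = true := by
      obtain ⟨i, hiS, hi⟩ := toBool _ (K6 m hm)
      simp only [Set.mem_insert_iff, Set.mem_singleton_iff] at hiS
      rcases hiS with rfl | rfl | rfl | rfl <;> simp [hT, mk _ hi]
    have b7 : (T 0 || T 1 || T 2 || T 3) = true := by
      obtain ⟨i, hiS, hi⟩ := toBool _ (K7 m hm)
      simp only [Set.mem_insert_iff, Set.mem_singleton_iff] at hiS
      rcases hiS with rfl | rfl | rfl | rfl <;> simp [hT, mk _ hi]
    have hedge := comb_aux T b1 b2 b3 b4 b5 b6 b7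
    simp only [Bool.or_eq_true, Bool.and_eq_true, hT, decide_eq_true_eq] at hedge
    rcases hedge with (((((((⟨h1, h2⟩ | ⟨h1, h2⟩) | ⟨h1, h2⟩) | ⟨h1, h2⟩) | ⟨h1, h2⟩) |
        ⟨h1, h2⟩) | ⟨h1, h2⟩) | ⟨h1, h2⟩)
    · exact ⟨Finsupp.single 0 1 + Finsupp.single 2 1, Set.mem_insert _ _, le_e_aux (by decide) h1 h2⟩
    · exact ⟨Finsupp.single 0 1 + Finsupp.single 3 1, Set.mem_insert_of_mem _ (Set.mem_insert _ _), le_e_aux (by decide) h1 h2⟩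
    · exact ⟨Finsupp.single 0 1 + Finsupp.single 5 1, Set.mem_insert_of_mem _ (Set.mem_insert_of_mem _ (Set.mem_insert _ _)), le_e_aux (by decide) h1 h2⟩
    · exact ⟨Finsupp.single 1 1 + Finsupp.single 3 1, Set.mem_insert_of_mem _ (Set.mem_insert_of_mem _ (Set.mem_insert_of_mem _ (Set.mem_insert _ _))), le_e_aux (by decide) h1 h2⟩
    · exact ⟨Finsupp.single 1 1 + Finsupp.single 4 1, Set.mem_insert_of_mem _ (Set.mem_insert_of_mem _ (Set.mem_insert_of_mem _ (Set.mem_insert_of_mem _ (Set.mem_insert _ _)))), le_e_aux (by decide) h1 h2⟩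
    · exact ⟨Finsupp.single 2 1 + Finsupp.single 4 1, Set.mem_insert_of_mem _ (Set.mem_insert_of_mem _ (Set.mem_insert_of_mem _ (Set.mem_insert_of_mem _ (Set.mem_insert_of_mem _ (Set.mem_insert _ _))))), le_e_aux (by decide) h1 h2⟩
    · exact ⟨Finsupp.single 2 1 + Finsupp.single 5 1, Set.mem_insert_of_mem _ (Set.mem_insert_of_mem _ (Set.mem_insert_of_mem _ (Set.mem_insert_of_mem _ (Set.mem_insert_of_mem _ (Set.mem_insert_of_mem _ (Set.mem_insert _ _)))))), le_e_aux (by decide) h1 h2⟩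
    · exact ⟨Finsupp.single 3 1 + Finsupp.single 5 1, Set.mem_insert_of_mem _ (Set.mem_insert_of_mem _ (Set.mem_insert_of_mem _ (Set.mem_insert_of_mem _ (Set.mem_insert_of_mem _ (Set.mem_insert_of_mem _ (Set.mem_insert_of_mem _ (rfl))))))), le_e_aux (by decide) h1 h2⟩
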